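/- Let d₁,…,d_g be positive integers and let b be a positive divisor of ψ(d₁,…,d_g). Setting c_i := d_i / gcd(d_i, b²) for i = 1,…,g, one has ψ(d₁,…,d_g) = b · ψ(c₁,…,c_g). -/

import Mathlib

open Finset

def psi (g : ℕ) (d : Fin g → ℕ) : ℕ :=
  ∏ p ∈ (∏ i, d i).primeFactors,
    p ^ (((Finset.univ.sup fun i => (d i).factorization p) + 1) / 2)

lemma psi_ne_zero (g : ℕ) (d : Fin g → ℕ) : psi g d ≠ 0 := by
  unfold psi
  exact (Finset.prod_pos fun p hp => pow_pos (Nat.pos_of_mem_primeFactors hp) _).ne'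

lemma psi_fact (g : ℕ) (d : Fin g → ℕ) (hd : ∀ i, d i ≠ 0) (q : ℕ) (hq : q.Prime) :
    (psi g d).factorization q
      = ((Finset.univ.sup fun i => (d i).factorization q) + 1) / 2 := by
  unfold psi
  rw [Nat.factorization_prod
    (fun p hp => pow_ne_zero _ (Nat.pos_of_mem_primeFactors hp).ne')]
  rw [Finsupp.finset_sum_apply]
  by_cases hmem : q ∈ (∏ i, d i).primeFactors
  · rw [Finset.sum_eq_single q]
    · rw [Nat.factorization_pow, Finsupp.smul_apply, hq.factorization,
        Finsupp.single_eq_same, smul_eq_mul, mul_one]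
    · intro p hp hpq
      rw [Nat.factorization_pow, Finsupp.smul_apply,
        (Nat.prime_of_mem_primeFactors hp).factorization,
        Finsupp.single_eq_of_ne' hpq, smul_eq_mul, mul_zero]
    · intro h; exact absurd hmem h
  · have hq0 : ∀ i, (d i).factorization q = 0 := by
      intro i
      apply Nat.factorization_eq_zero_of_not_dvd
      intro hdvd
      exact hmem (Nat.mem_primeFactors.mpr
        ⟨hq, hdvd.trans (Finset.dvd_prod_of_mem d (Finset.mem_univ i)),
          Finset.prod_ne_zero_iff.mpr fun i _ => hd i⟩)
    have : (Finset.univ.sup fun i => (d i).factorization q) = 0 := by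
      simp [hq0]
    rw [this]
    show _ = 0
    apply Finset.sum_eq_zero
    intro p hp
    rw [Nat.factorization_pow, Finsupp.smul_apply,
      (Nat.prime_of_mem_primeFactors hp).factorization,
      Finsupp.single_eq_of_ne, smul_eq_mul, mul_zero]
    intro h; exact hmem (h ▸ hp)

theorem stmt2 (g : ℕ) (hg : 1 ≤ g) (d : Fin g → ℕ) (hd : ∀ i, 0 < d i)
    (b : ℕ) (hb : 0 < b) (hdvd : b ∣ psi g d) :
    psi g d = b * psi g (fun i => d i / Nat.gcd (d i) (b ^ 2)) := by
  have hne : Nonempty (Fin g) := Fin.pos_iff_nonempty.mp hg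
  set c : Fin g → ℕ := fun i => d i / Nat.gcd (d i) (b ^ 2) with hc
  have hb2 : b ^ 2 ≠ 0 := pow_ne_zero _ hb.ne'
  have hcpos : ∀ i, 0 < c i := fun i =>
    Nat.div_pos (Nat.le_of_dvd (hd i) (Nat.gcd_dvd_left _ _))
      (Nat.gcd_pos_of_pos_left _ (hd i))
  have hL : psi g d ≠ 0 := psi_ne_zero g d
  have hR : b * psi g c ≠ 0 := mul_ne_zero hb.ne' (psi_ne_zero g c)
  apply Nat.eq_of_factorization_eq hL hR
  intro q
  by_cases hq : q.Prime
  · have hcfact : ∀ i, (c i).factorization q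
        = (d i).factorization q - 2 * b.factorization q := by
      intro i
      rw [hc]
      simp only []
      rw [Nat.factorization_div (Nat.gcd_dvd_left _ _)]
      rw [Finsupp.tsub_apply, Nat.factorization_gcd (hd i).ne' hb2,
        Finsupp.inf_apply, Nat.factorization_pow, Finsupp.smul_apply]
      simp only [smul_eq_mul]
      omega
    have hsup : (Finset.univ.sup fun i => (c i).factorization q)
        = (Finset.univ.sup fun i => (d i).factorization q) - 2 * b.factorization q := by
      apply le_antisymm
      · exact Finset.sup_le fun i _ => (hcfact i).le.trans
          (Nat.sub_le_sub_right
            (Finset.le_sup (f := fun i => (d i).factorization q) (Finset.mem_univ i)) _)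
      · obtain ⟨i, _, hi⟩ := Finset.exists_mem_eq_sup Finset.univ Finset.univ_nonempty
          (fun i => (d i).factorization q)
        rw [hi, ← hcfact i]
        exact Finset.le_sup (f := fun i => (c i).factorization q) (Finset.mem_univ i)
    have hble : b.factorization q
        ≤ ((Finset.univ.sup fun i => (d i).factorization q) + 1) / 2 := by
      have := (Nat.factorization_le_iff_dvd hb.ne' hL).mpr hdvd
      have := this q
      rwa [psi_fact g d (fun i => (hd i).ne') q hq] at this
    rw [Nat.factorization_mul hb.ne' (psi_ne_zero g c), Finsupp.add_apply,
      psi_fact g d (fun i => (hd i).ne') q hq,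
      psi_fact g c (fun i => (hcpos i).ne') q hq, hsup]
    omega
  · rw [Nat.factorization_eq_zero_of_not_prime _ hq,
      Nat.factorization_eq_zero_of_not_prime _ hq]
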